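/- Let G be a bipartite finite simple graph with minimum degree δ ≥ 1. Then R(G) ≤ √δ. Moreover, if δ ≥ 2, or if δ = 1 and G has a connected component of minimum degree 1 that is not isomorphic to the complete graph K₂, then R(G) < √δ. -/

import Mathlib

open Polynomial

/-- The HL-index of a finite simple graph: the maximum of the absolute values of the
median eigenvalues of its adjacency matrix. The eigenvalues (with multiplicity) are the
roots of the characteristic polynomial; sorted increasingly in a list `l` of length `n`,
the two median eigenvalues (in the decreasing ordering λ₁ ≥ ⋯ ≥ λₙ, the ones with
1-based indices ⌊(n+1)/2⌋ and ⌈(n+1)/2⌉) occupy the 0-based positions `(n-1)/2` and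
`n/2` of `l`. -/
noncomputable def hlIndex {V : Type*} [Fintype V] (G : SimpleGraph V) : ℝ :=
  letI := Classical.decEq V
  letI : DecidableRel G.Adj := Classical.decRel _
  let n := Fintype.card V
  let l := (G.adjMatrix ℝ).charpoly.roots.sort (· ≤ ·)
  max |l.getD ((n - 1) / 2) 0| |l.getD (n / 2) 0|

namespace HLaux
open Matrix

variable {V : Type} [Fintype V] [DecidableEq V]

lemma charpoly_diag (d : V → ℝ) : (diagonal d).charpoly = ∏ i, (X - C (d i)) := by
  have h : charmatrix (diagonal d) = diagonal (fun i => (X : ℝ[X]) - C (d i)) := by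
    ext i j
    by_cases h : i = j
    · subst h; simp
    · rw [charmatrix_apply_ne _ _ _ h, diagonal_apply_ne _ h, diagonal_apply_ne _ h, map_zero,
        neg_zero]
  rw [Matrix.charpoly, h, det_diagonal]

lemma charpoly_conj (P Q M : Matrix V V ℝ) (hPQ : P * Q = 1) :
    (P * M * Q).charpoly = M.charpoly := by
  have hmap : (C : ℝ →+* ℝ[X]).mapMatrix P * (C : ℝ →+* ℝ[X]).mapMatrix Q = 1 := by
    rw [← _root_.map_mul, hPQ, _root_.map_one]
  have h : charmatrix (P * M * Q) =
      (C : ℝ →+* ℝ[X]).mapMatrix P * charmatrix M * (C : ℝ →+* ℝ[X]).mapMatrix Q := by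
    unfold charmatrix
    rw [mul_sub, sub_mul, ← _root_.map_mul, ← _root_.map_mul]
    congr 1
    rw [scalar_apply, ← smul_one_eq_diagonal, mul_smul_comm, smul_mul_assoc, mul_one, hmap]
  rw [Matrix.charpoly, Matrix.charpoly, h, det_mul, det_mul, mul_comm, ← mul_assoc, ← det_mul]
  have : (C : ℝ →+* ℝ[X]).mapMatrix Q * (C : ℝ →+* ℝ[X]).mapMatrix P = 1 := by
    rw [← _root_.map_mul, mul_eq_one_comm.mp hPQ, _root_.map_one]
  rw [this, det_one, one_mul]

lemma roots_charpoly_conj_diag (U : Matrix V V ℝ) (hU : U ∈ Matrix.unitaryGroup V ℝ)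
    (g : V → ℝ) (B : Matrix V V ℝ) (hB : B = U * diagonal g * star U) :
    B.charpoly.roots = Finset.univ.val.map g := by
  have hPQ : U * star U = 1 := (Matrix.mem_unitaryGroup_iff).mp hU
  rw [hB, charpoly_conj _ _ _ hPQ, charpoly_diag]
  have : ∏ i, ((X : ℝ[X]) - C (g i)) = ((Finset.univ.val.map g).map fun a => X - C a).prod := by
    rw [Multiset.map_map]
    rfl
  rw [this, roots_multiset_prod_X_sub_C]

variable {A : Matrix V V ℝ}

lemma spec_real (hA : A.IsHermitian) :
    A = (hA.eigenvectorUnitary : Matrix V V ℝ) * diagonal hA.eigenvalues *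
      star (hA.eigenvectorUnitary : Matrix V V ℝ) := by
  have := hA.spectral_theorem
  rwa [RCLike.ofReal_real_eq_id, Function.id_comp] at this

lemma roots_charpoly_self (hA : A.IsHermitian) :
    A.charpoly.roots = Finset.univ.val.map hA.eigenvalues :=
  roots_charpoly_conj_diag _ (hA.eigenvectorUnitary).2 _ _ (spec_real hA)

lemma roots_charpoly_neg (hA : A.IsHermitian) :
    (-A).charpoly.roots = A.charpoly.roots.map (fun x => -x) := by
  rw [roots_charpoly_self hA, Multiset.map_map]
  refine roots_charpoly_conj_diag _ (hA.eigenvectorUnitary).2 _ _ ?_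
  conv_lhs => rw [spec_real hA]
  have h : ((fun x => -x) ∘ hA.eigenvalues) = fun i => -hA.eigenvalues i := rfl
  rw [h, ← diagonal_neg, mul_neg, neg_mul]

lemma roots_charpoly_sq_sub (hA : A.IsHermitian) (c : ℝ) :
    (A * A - c • 1).charpoly.roots = A.charpoly.roots.map (fun x => x ^ 2 - c) := by
  rw [roots_charpoly_self hA, Multiset.map_map]
  refine roots_charpoly_conj_diag _ (hA.eigenvectorUnitary).2 _ _ ?_
  have hPQ : (hA.eigenvectorUnitary : Matrix V V ℝ) * star (hA.eigenvectorUnitary : Matrix V V ℝ)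
      = 1 := (Matrix.mem_unitaryGroup_iff).mp (hA.eigenvectorUnitary).2
  have hQP : star (hA.eigenvectorUnitary : Matrix V V ℝ) * (hA.eigenvectorUnitary : Matrix V V ℝ)
      = 1 := (Matrix.mem_unitaryGroup_iff').mp (hA.eigenvectorUnitary).2
  conv_lhs => rw [spec_real hA]
  have h1 : ((hA.eigenvectorUnitary : Matrix V V ℝ) * diagonal hA.eigenvalues *
      star (hA.eigenvectorUnitary : Matrix V V ℝ)) * ((hA.eigenvectorUnitary : Matrix V V ℝ) *
      diagonal hA.eigenvalues * star (hA.eigenvectorUnitary : Matrix V V ℝ))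
      = (hA.eigenvectorUnitary : Matrix V V ℝ) * (diagonal (fun i => hA.eigenvalues i ^ 2)) *
      star (hA.eigenvectorUnitary : Matrix V V ℝ) := by
    simp only [← mul_assoc]
    rw [mul_assoc ((hA.eigenvectorUnitary : Matrix V V ℝ) * diagonal hA.eigenvalues)
      (star (hA.eigenvectorUnitary : Matrix V V ℝ)) (hA.eigenvectorUnitary : Matrix V V ℝ),
      hQP, mul_one, mul_assoc (hA.eigenvectorUnitary : Matrix V V ℝ), diagonal_mul_diagonal]
    congr 2
    ext i
    ring
  have h2 : c • (1 : Matrix V V ℝ) = (hA.eigenvectorUnitary : Matrix V V ℝ) *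
      (diagonal (fun _ => c)) * star (hA.eigenvectorUnitary : Matrix V V ℝ) := by
    rw [← smul_one_eq_diagonal, mul_smul_comm, smul_mul_assoc, mul_one, hPQ]
  rw [h1, h2, ← sub_mul, ← mul_sub, diagonal_sub]
  rfl

lemma hlIndex_eq (G : SimpleGraph V) [DecidableRel G.Adj] :
    hlIndex G = max |((G.adjMatrix ℝ).charpoly.roots.sort (· ≤ ·)).getD
        ((Fintype.card V - 1) / 2) 0|
      |((G.adjMatrix ℝ).charpoly.roots.sort (· ≤ ·)).getD (Fintype.card V / 2) 0| := by
  unfold hlIndex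
  congr!

lemma adj_hermitian (G : SimpleGraph V) [DecidableRel G.Adj] : (G.adjMatrix ℝ).IsHermitian := by
  ext i j
  rw [Matrix.conjTranspose_apply]
  simp [SimpleGraph.adj_comm]

lemma charpoly_neg_adj (G : SimpleGraph V) [DecidableRel G.Adj] (hbip : G.Colorable 2) :
    (-(G.adjMatrix ℝ)).charpoly = (G.adjMatrix ℝ).charpoly := by
  obtain ⟨Co⟩ := hbip
  set d : V → ℝ := fun v => if Co v = 0 then (1 : ℝ) else -1 with hd
  have hDD : diagonal d * diagonal d = 1 := by
    rw [diagonal_mul_diagonal]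
    have h1 : (fun v => d v * d v) = fun _ => (1 : ℝ) := by
      funext v
      by_cases h : Co v = 0 <;> simp [hd, h]
    rw [h1]
    exact diagonal_one
  have hDAD : diagonal d * G.adjMatrix ℝ * diagonal d = -(G.adjMatrix ℝ) := by
    ext i j
    rw [mul_diagonal, diagonal_mul]
    by_cases h : G.Adj i j
    · have hne : Co i ≠ Co j := Co.valid h
      have : d i * d j = -1 := by
        rcases Fin.exists_fin_two.mp ⟨Co i, rfl⟩ with h1 | h1 <;>
          rcases Fin.exists_fin_two.mp ⟨Co j, rfl⟩ with h2 | h2 <;>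
            simp [hd, h1, h2] at hne ⊢
      rw [show d i * (G.adjMatrix ℝ) i j * d j = d i * d j * (G.adjMatrix ℝ) i j from by ring,
        this]
      simp [h]
    · simp [h]
  rw [← hDAD, charpoly_conj _ _ _ hDD]

lemma sort_symm {m : Multiset ℝ} (hm : m.map (fun x => -x) = m) :
    m.sort (· ≤ ·) = ((m.sort (· ≤ ·)).map (fun x => -x)).reverse := by
  set l := m.sort (· ≤ ·) with hl
  have hperm : l.Perm ((l.map (fun x => -x)).reverse) := by
    rw [← Multiset.coe_eq_coe, Multiset.coe_reverse, ← Multiset.map_coe]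
    rw [hl, Multiset.sort_eq, hm]
  refine List.Perm.eq_of_pairwise' (Multiset.pairwise_sort m _) ?_ hperm
  rw [List.pairwise_reverse, List.pairwise_map]
  have := Multiset.pairwise_sort m (· ≤ ·)
  exact this.imp (fun h => by simpa using h)

lemma nonempty_of_minDegree (G : SimpleGraph V) [DecidableRel G.Adj] (h : 1 ≤ G.minDegree) :
    Nonempty V := by
  by_contra hc
  rw [not_nonempty_iff] at hc
  have : G.minDegree = 0 := by
    unfold SimpleGraph.minDegree
    rw [Finset.univ_eq_empty, Finset.image_empty]
    rfl
  omega

lemma vertex_acquisition (G : SimpleGraph V) [DecidableRel G.Adj] (hδ : 1 ≤ G.minDegree)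
    (hcase : 2 ≤ G.minDegree ∨
      (G.minDegree = 1 ∧
        ∃ c : G.ConnectedComponent,
          (letI : Fintype ↥c.supp := Fintype.ofFinite _
           letI : DecidableRel (G.induce c.supp).Adj := Classical.decRel _
           (G.induce c.supp).minDegree = 1) ∧
          ¬ Nonempty (G.induce c.supp ≃g (⊤ : SimpleGraph (Fin 2))))) :
    ∃ v u w0, G.degree v = G.minDegree ∧ u ≠ v ∧ G.Adj v w0 ∧ G.Adj w0 u := by
  obtain hc2 | ⟨hδ1, c, hc1, hcK⟩ := hcase
  · have : Nonempty V := nonempty_of_minDegree G hδ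
    obtain ⟨v, hv⟩ := G.exists_minimal_degree_vertex
    have hvpos : 0 < (G.neighborFinset v).card := by
      rw [SimpleGraph.card_neighborFinset_eq_degree]
      omega
    obtain ⟨w0, hw⟩ := Finset.card_pos.mp hvpos
    have hvw : G.Adj v w0 := (SimpleGraph.mem_neighborFinset _ _ _).mp hw
    have hdw : 1 < (G.neighborFinset w0).card := by
      rw [SimpleGraph.card_neighborFinset_eq_degree]
      have := G.minDegree_le_degree w0
      omega
    obtain ⟨u, hu, hune⟩ := Finset.exists_mem_ne hdw v
    exact ⟨v, u, w0, hv.symm, hune, hvw, (SimpleGraph.mem_neighborFinset _ _ _).mp hu⟩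
  · letI : Fintype ↥c.supp := Fintype.ofFinite _
    letI : DecidableRel (G.induce c.supp).Adj := Classical.decRel _
    have hne : Nonempty ↥c.supp := by
      obtain ⟨x, hx⟩ := c.exists_rep
      exact ⟨⟨x, by rwa [SimpleGraph.ConnectedComponent.mem_supp_iff]⟩⟩
    obtain ⟨v', hv'⟩ := (G.induce c.supp).exists_minimal_degree_vertex
    rw [hc1] at hv'
    have hv'supp : (v' : V) ∈ c.supp := v'.2
    have hv'mk : G.connectedComponentMk (v' : V) = c := by
      rwa [SimpleGraph.ConnectedComponent.mem_supp_iff] at hv'supp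
    have hmemsup : ∀ (x : V), G.Adj (v' : V) x → x ∈ c.supp := by
      intro x hx
      rw [SimpleGraph.ConnectedComponent.mem_supp_iff, ← hv'mk]
      exact SimpleGraph.ConnectedComponent.sound hx.symm.reachable
    have hdeg : G.degree (v' : V) = (G.induce c.supp).degree v' := by
      have e1 : (G.induce c.supp).degree v' = ((G.induce c.supp).neighborFinset v').card := rfl
      have e2 : G.degree (v' : V) = (G.neighborFinset (v' : V)).card := rfl
      rw [e1, e2]
      apply Finset.card_bij (fun (x : V) (hx : x ∈ G.neighborFinset (v' : V)) =>
        (⟨x, hmemsup x ((SimpleGraph.mem_neighborFinset _ _ _).mp hx)⟩ : ↥c.supp))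
      · intro x hx
        rw [SimpleGraph.mem_neighborFinset] at hx ⊢
        simpa using hx
      · intro x hx y hy hxy
        simpa using congrArg Subtype.val hxy
      · intro y hy
        rw [SimpleGraph.mem_neighborFinset] at hy
        refine ⟨(y : V), ?_, rfl⟩
        rw [SimpleGraph.mem_neighborFinset]
        simpa using hy
    have hdegv : G.degree (v' : V) = 1 := by rw [hdeg, ← hv']
    obtain ⟨w0, hwdef⟩ : ∃ w0, G.neighborFinset (v' : V) = {w0} := Finset.card_eq_one.mp (by
      rw [SimpleGraph.card_neighborFinset_eq_degree, hdegv])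
    have hvw : G.Adj (v' : V) w0 := by
      rw [← SimpleGraph.mem_neighborFinset, hwdef]
      exact Finset.mem_singleton_self w0
    by_cases hdw : 2 ≤ G.degree w0
    · obtain ⟨u, hu, hune⟩ := Finset.exists_mem_ne
        (s := G.neighborFinset w0) (by
        rw [SimpleGraph.card_neighborFinset_eq_degree]; omega) (v' : V)
      exact ⟨(v' : V), u, w0, by omega, hune, hvw, (SimpleGraph.mem_neighborFinset _ _ _).mp hu⟩
    · exfalso
      apply hcK
      have hdw1 : G.degree w0 = 1 := by
        have := G.minDegree_le_degree w0
        omega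
      have hwnbr : G.neighborFinset w0 = {(v' : V)} := by
        obtain ⟨z, hz⟩ := Finset.card_eq_one.mp (by
          rw [SimpleGraph.card_neighborFinset_eq_degree, hdw1] : (G.neighborFinset w0).card = 1)
        have : (v' : V) ∈ G.neighborFinset w0 := by
          rw [SimpleGraph.mem_neighborFinset]
          exact hvw.symm
        rw [hz] at this ⊢
        rw [Finset.mem_singleton] at this
        rw [this]
      have hkey : ∀ (a b : V), G.Walk a b → (a = (v' : V) ∨ a = w0) → (b = (v' : V) ∨ b = w0) := by
        intro a b p
        induction p with
        | nil => exact id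
        | @cons p1 p2 p3 h p ih =>
          intro ha
          apply ih
          rcases ha with ha | ha
          · right
            have h2 : p2 ∈ G.neighborFinset (v' : V) := by
              rw [SimpleGraph.mem_neighborFinset]; exact ha ▸ h
            rw [hwdef, Finset.mem_singleton] at h2
            exact h2
          · left
            have h2 : p2 ∈ G.neighborFinset w0 := by
              rw [SimpleGraph.mem_neighborFinset]; exact ha ▸ h
            rw [hwnbr, Finset.mem_singleton] at h2
            exact h2
      have hwsupp : w0 ∈ c.supp := hmemsup w0 hvw
      have hsupp : ∀ x : V, x ∈ c.supp ↔ (x = (v' : V) ∨ x = w0) := by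
        intro x
        constructor
        · intro hx
          rw [SimpleGraph.ConnectedComponent.mem_supp_iff] at hx
          have hreach : G.Reachable (v' : V) x :=
            SimpleGraph.ConnectedComponent.eq.mp (hv'mk.trans hx.symm)
          obtain ⟨p⟩ := hreach
          exact hkey _ _ p (Or.inl rfl)
        · rintro (rfl | rfl)
          · exact hv'supp
          · exact hwsupp
      have hvne : (v' : V) ≠ w0 := G.ne_of_adj hvw
      refine ⟨⟨⟨fun x => if (x : V) = (v' : V) then 0 else 1,
        fun i => if i = 0 then ⟨(v' : V), hv'supp⟩ else ⟨w0, hwsupp⟩, ?_, ?_⟩, ?_⟩⟩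
      · intro x
        rcases (hsupp x).mp x.2 with h | h
        · apply Subtype.ext
          simp [h]
        · apply Subtype.ext
          simp [h, hvne.symm]
      · intro i
        fin_cases i
        · simp
        · simp [hvne, hvne.symm]
      · intro a b
        simp only [Equiv.coe_fn_mk, SimpleGraph.top_adj, SimpleGraph.comap_adj,
          Function.Embedding.coe_subtype]
        rcases (hsupp a).mp a.2 with ha | ha <;> rcases (hsupp b).mp b.2 with hb | hb
        · rw [ha, hb]
          simp [G.irrefl]
        · rw [ha, hb]
          simp [hvne.symm, hvw, hvne]
        · rw [ha, hb]
          simp [hvne, hvne.symm, hvw.symm]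
        · rw [ha, hb]
          simp [G.irrefl]

end HLaux

theorem bipartite_HL_index_le_sqrt_minDegree
    {V : Type} [Fintype V] [DecidableEq V] (G : SimpleGraph V) [DecidableRel G.Adj]
    (hbip : G.Colorable 2) (hδ : 1 ≤ G.minDegree) :
    hlIndex G ≤ Real.sqrt (G.minDegree : ℝ) ∧
      ((2 ≤ G.minDegree ∨
          (G.minDegree = 1 ∧
            ∃ c : G.ConnectedComponent,
              (letI : Fintype ↥c.supp := Fintype.ofFinite _
               letI : DecidableRel (G.induce c.supp).Adj := Classical.decRel _
               (G.induce c.supp).minDegree = 1) ∧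
              ¬ Nonempty (G.induce c.supp ≃g (⊤ : SimpleGraph (Fin 2))))) →
        hlIndex G < Real.sqrt (G.minDegree : ℝ)) := by
  open Matrix HLaux in
  set A := G.adjMatrix ℝ with hAdef
  have hH : A.IsHermitian := HLaux.adj_hermitian G
  set n := Fintype.card V with hn
  set m := A.charpoly.roots with hm
  have hcard : Multiset.card m = n := by
    rw [hm, HLaux.roots_charpoly_self hH, Multiset.card_map]
    rfl
  have hVne : Nonempty V := by
    by_contra h
    rw [not_nonempty_iff] at h
    have : G.minDegree = 0 := by
      unfold SimpleGraph.minDegree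
      rw [Finset.univ_eq_empty, Finset.image_empty]
      rfl
    omega
  have hn1 : 1 ≤ n := Fintype.card_pos
  have hsym : m.map (fun x => -x) = m := by
    rw [hm, ← HLaux.roots_charpoly_neg hH, HLaux.charpoly_neg_adj G hbip]
  set l := m.sort (· ≤ ·) with hls
  have hlen : l.length = n := by rw [hls, Multiset.length_sort, hcard]
  have hrev : l = (l.map (fun x => -x)).reverse := HLaux.sort_symm hsym
  have hgets : ∀ i, (hi : i < n) → ∀ (h1 : i < l.length) (h2 : n - 1 - i < l.length),
      l[i] = -l[n - 1 - i] := by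
    intro i hi h1 h2
    have e1 := List.getElem_of_eq hrev h1
    rw [List.getElem_reverse, List.getElem_map] at e1
    simp only [List.length_map, hlen] at e1
    exact e1
  have hj1 : (n-1)/2 < n := by omega
  have hj2 : n/2 < n := by omega
  have hj1l : (n-1)/2 < l.length := by omega
  have hj2l : n/2 < l.length := by omega
  set r := l[n/2]'hj2l with hr
  have h12 : l[(n-1)/2]'hj1l = -r := by
    have e := hgets ((n-1)/2) hj1 hj1l (by omega)
    have e2 : n - 1 - (n-1)/2 = n/2 := by omega
    simp only [e2] at e
    exact e
  have hsorted : l.Pairwise (· ≤ ·) := Multiset.pairwise_sort m _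
  have hmono : ∀ (i j : ℕ) (h1 : i < l.length) (h2 : j < l.length), i ≤ j →
      l[i] ≤ l[j] := by
    intro i j h1 h2 hij
    have := hsorted.rel_get_of_le (a := ⟨i, h1⟩) (b := ⟨j, h2⟩) (by exact hij)
    simpa using this
  have hr0 : 0 ≤ r := by
    have := hmono ((n-1)/2) (n/2) hj1l hj2l (by omega)
    rw [h12] at this
    linarith
  have hIdx : hlIndex G = r := by
    rw [HLaux.hlIndex_eq G, ← hn, ← hm, ← hls]
    rw [List.getD_eq_getElem l 0 hj1l, List.getD_eq_getElem l 0 hj2l, h12, ← hr, abs_neg,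
      max_self, abs_of_nonneg hr0]
  have key : ∀ x ∈ m, r ≤ |x| := by
    intro x hx
    have hxl : x ∈ l := by rw [hls, Multiset.mem_sort]; exact hx
    obtain ⟨i, hi, hix⟩ := List.mem_iff_getElem.mp hxl
    rcases le_or_gt (n/2) i with hc | hc
    · have := hmono (n/2) i hj2l hi hc
      rw [hix] at this
      rw [abs_of_nonneg (by linarith)]
      linarith
    · have hsy := hgets i (by omega) hi (by omega)
      have hge : n/2 ≤ n - 1 - i := by omega
      have := hmono (n/2) (n-1-i) hj2l (by omega) hge
      rw [← hix, hsy, abs_neg, abs_of_nonneg (by linarith)]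
      linarith
  -- positive semidefiniteness machinery
  have psd : ∀ c : ℝ, (∀ x ∈ m, c ≤ x ^ 2) → (A * A - c • 1).PosSemidef := by
    intro c hc
    have hAA : (A * A).IsHermitian := by
      rw [Matrix.IsHermitian, conjTranspose_mul, hH]
    have h1 : (c • (1 : Matrix V V ℝ)).IsHermitian := by
      rw [Matrix.IsHermitian, conjTranspose_smul, conjTranspose_one]
      simp
    have hNH : (A * A - c • 1).IsHermitian := hAA.sub h1
    apply hNH.posSemidef_iff_eigenvalues_nonneg.mpr
    intro j
    have hmem : hNH.eigenvalues j ∈ (A * A - c • 1).charpoly.roots := by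
      rw [HLaux.roots_charpoly_self hNH]
      exact Multiset.mem_map_of_mem _ (Finset.mem_univ j)
    rw [HLaux.roots_charpoly_sq_sub hH] at hmem
    obtain ⟨x, hx, hxe⟩ := Multiset.mem_map.mp hmem
    rw [← hxe]
    have := hc x hx
    rw [Pi.zero_apply]
    linarith
  have hdot : ∀ (c : ℝ) (v u : V), (Pi.single v (1:ℝ)) ⬝ᵥ ((A * A - c • 1) *ᵥ Pi.single u 1)
      = (A * A - c • 1) v u := by
    intro c v u
    rw [mulVec_single]
    rw [single_dotProduct]
    simp
  have hentry_dd : ∀ (c : ℝ) (v : V), (A * A - c • 1) v v = (G.degree v : ℝ) - c := by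
    intro c v
    rw [Matrix.sub_apply, Matrix.smul_apply, Matrix.one_apply_eq]
    rw [hAdef, SimpleGraph.adjMatrix_mul_self_apply_self]
    simp
  constructor
  · -- part 1
    obtain ⟨v₀, hv₀⟩ := G.exists_minimal_degree_vertex
    have hall : ∀ x ∈ m, (r^2 : ℝ) ≤ x ^ 2 := by
      intro x hx
      have h1 := key x hx
      calc r ^ 2 ≤ |x| ^ 2 := pow_le_pow_left₀ hr0 h1 2
      _ = x ^ 2 := sq_abs x
    have hPSD := psd (r^2) hall
    have h0 := hPSD.dotProduct_mulVec_nonneg (Pi.single v₀ 1)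
    rw [star_trivial, hdot] at h0
    rw [hentry_dd] at h0
    have hδv : (G.degree v₀ : ℝ) = (G.minDegree : ℝ) := by
      exact_mod_cast hv₀.symm
    rw [hIdx, Real.le_sqrt hr0 (by positivity)]
    linarith
  · -- part 2
    intro hcase
    rw [hIdx]
    by_contra hnot
    push_neg at hnot
    have hδr : (G.minDegree : ℝ) ≤ r ^ 2 := by
      have h1 : Real.sqrt (G.minDegree : ℝ) ^ 2 ≤ r ^ 2 :=
        pow_le_pow_left₀ (Real.sqrt_nonneg _) hnot 2
      rwa [Real.sq_sqrt (by positivity)] at h1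
    have hallδ : ∀ x ∈ m, ((G.minDegree : ℝ)) ≤ x ^ 2 := by
      intro x hx
      have h1 := key x hx
      have : r ^ 2 ≤ x ^ 2 := by
        calc r ^ 2 ≤ |x| ^ 2 := pow_le_pow_left₀ hr0 h1 2
        _ = x ^ 2 := sq_abs x
      linarith
    have hPSD := psd (G.minDegree : ℝ) hallδ
    obtain ⟨v, u, w, hdegv, hneu, hvw, hwu⟩ := HLaux.vertex_acquisition G hδ hcase
    set N := A * A - (G.minDegree : ℝ) • 1 with hN
    set b := (A * A) v u with hb
    set a := (A * A) u u - (G.minDegree : ℝ) with ha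
    have hNvu : N v u = b := by
      rw [hN, Matrix.sub_apply, Matrix.smul_apply, Matrix.one_apply_ne (fun h => hneu h.symm)]
      simp [hb]
    have hAAsymm : (A * A) u v = (A * A) v u := by
      have hAA : (A * A).IsHermitian := by
        rw [Matrix.IsHermitian, conjTranspose_mul, hH]
      conv_lhs => rw [← hAA]
      rw [conjTranspose_apply]
      simp
    have hNuv : N u v = b := by
      rw [hN, Matrix.sub_apply, Matrix.smul_apply, Matrix.one_apply_ne hneu]
      simp [hb, hAAsymm]
    have hNuu : N u u = a := by
      rw [hN, Matrix.sub_apply, Matrix.smul_apply, Matrix.one_apply_eq]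
      simp [ha]
    have hNvv : N v v = 0 := by
      rw [hN, hentry_dd, hdegv]
      ring
    have hb1 : (1:ℝ) ≤ b := by
      rw [hb, hAdef, SimpleGraph.adjMatrix_mul_apply]
      have h1 : w ∈ G.neighborFinset v := by simpa using hvw
      calc (1:ℝ) = G.adjMatrix ℝ w u := by simp [hwu]
      _ ≤ ∑ x ∈ G.neighborFinset v, G.adjMatrix ℝ x u := by
          apply Finset.single_le_sum (fun i _ => ?_) h1
          simp only [SimpleGraph.adjMatrix_apply]
          split_ifs <;> norm_num
    have ha0 : (0:ℝ) ≤ a := by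
      rw [ha, hAdef, SimpleGraph.adjMatrix_mul_self_apply_self]
      have := G.minDegree_le_degree u
      have : (G.minDegree : ℝ) ≤ (G.degree u : ℝ) := by exact_mod_cast this
      linarith
    set t := b / (a + 1) with ht
    set xv : V → ℝ := (Pi.single v (1:ℝ) : V → ℝ) - t • (Pi.single u (1:ℝ) : V → ℝ) with hxv
    have hq := hPSD.dotProduct_mulVec_nonneg xv
    rw [star_trivial] at hq
    have hexp : xv ⬝ᵥ (N *ᵥ xv)
        = N v v - t * N v u - t * N u v + t^2 * N u u := by
      rw [hxv]
      rw [hN]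
      simp only [Matrix.mulVec_sub, Matrix.mulVec_smul, sub_dotProduct,
        dotProduct_sub, smul_dotProduct, dotProduct_smul, hdot,
        smul_eq_mul]
      ring
    rw [hexp, hNvv, hNvu, hNuv, hNuu] at hq
    have ha1 : (0:ℝ) < a + 1 := by linarith
    have heq : 0 - t * b - t * b + t^2 * a = -(b^2 * (a+2))/(a+1)^2 := by
      rw [ht]
      field_simp
      ring
    rw [heq] at hq
    have hlt : -(b^2 * (a+2))/(a+1)^2 < 0 := by
      apply div_neg_of_neg_of_pos
      · nlinarith
      · positivity
    linarith
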